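/- For every finite list k_1, …, k_m : E → ℤ there exists an element Q of the commutative K-subalgebra Algebra.adjoin K {u_e : e ∈ E} of A such that z^{k_1} * z^{k_2} * ⋯ * z^{k_m} = Q * z^{k_1 + k_2 + ⋯ + k_m}. (Each ℤE-homogeneous component of the Weyl algebra is a cyclic module over the polynomial subalgebra generated by the u_e, with generator the monomial z of that degree; every monic monomial is a polynomial multiple of the reduced monomial of the same degree.) -/

import Mathlib

set_option linter.unusedSectionVars false

open MvPolynomial

variable {K : Type*} [Field K] {E : Type*} [Fintype E] [DecidableEq E]

noncomputable def Wx (K : Type*) [Field K] {E : Type*} (e : E) :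
    Module.End K (MvPolynomial E K) :=
  LinearMap.mulLeft K (X e)

noncomputable def Wy (K : Type*) [Field K] {E : Type*} (e : E) :
    Module.End K (MvPolynomial E K) :=
  (pderiv e).toLinearMap

noncomputable def Wu (K : Type*) [Field K] {E : Type*} (e : E) :
    Module.End K (MvPolynomial E K) :=
  Wy K e * Wx K e

lemma pderiv_pderiv_comm (a b : E) (p : MvPolynomial E K) :
    pderiv a (pderiv b p) = pderiv b (pderiv a p) := by
  induction p using MvPolynomial.induction_on with
  | C c => simp
  | add p q hp hq => simp [hp, hq]
  | mul_X p i hp =>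
      by_cases hai : a = i
      · subst hai
        by_cases hbi : b = a
        · subst hbi; rfl
        · simp [pderiv_mul, pderiv_X_of_ne (Ne.symm hbi), hp]; ring
      · by_cases hbi : b = i
        · subst hbi
          simp [pderiv_mul, pderiv_X_of_ne (Ne.symm hai), hp]; ring
        · simp [pderiv_mul, pderiv_X_of_ne (Ne.symm hai), pderiv_X_of_ne (Ne.symm hbi), hp]

lemma commute_Wx_Wx (a b : E) : Commute (Wx K a) (Wx K b) := by
  show _ = _
  apply LinearMap.ext; intro p
  simp [Wx, Module.End.mul_apply, mul_left_comm]

lemma commute_Wy_Wy (a b : E) : Commute (Wy K a) (Wy K b) := by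
  show _ = _
  apply LinearMap.ext; intro p
  simpa [Wy, Module.End.mul_apply] using pderiv_pderiv_comm (K := K) a b p

lemma commute_Wy_Wx {a b : E} (h : a ≠ b) : Commute (Wy K a) (Wx K b) := by
  show _ = _
  apply LinearMap.ext; intro p
  simp [Wy, Wx, Module.End.mul_apply, pderiv_mul, pderiv_X_of_ne (Ne.symm h)]

/-- `z_e^{(p)}` -/
noncomputable def Wz (K : Type*) [Field K] {E : Type*} (e : E) (p : ℤ) :
    Module.End K (MvPolynomial E K) :=
  if 0 ≤ p then Wx K e ^ p.toNat else Wy K e ^ (-p).toNat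

lemma commute_Wz {a b : E} (h : a ≠ b) (p q : ℤ) :
    Commute (Wz K a p) (Wz K b q) := by
  unfold Wz
  split_ifs <;>
    exact Commute.pow_pow (by
      first
        | exact commute_Wx_Wx a b
        | exact commute_Wy_Wy a b
        | exact commute_Wy_Wx h
        | exact (commute_Wy_Wx h.symm).symm) _ _

/-- `z^k` for `k : E → ℤ` -/
noncomputable def Zpow (K : Type*) [Field K] {E : Type*} [Fintype E] [DecidableEq E]
    (k : E → ℤ) : Module.End K (MvPolynomial E K) :=
  Finset.univ.noncommProd (fun e => Wz K e (k e))
    (fun a _ b _ hab => commute_Wz hab _ _)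

lemma commute_aeval_aeval {A : Type*} [Ring A] [Algebra K A] {a b : A} (h : Commute a b)
    (p q : Polynomial K) : Commute (Polynomial.aeval a p) (Polynomial.aeval b q) := by
  rw [Polynomial.aeval_eq_sum_range, Polynomial.aeval_eq_sum_range]
  apply Commute.sum_left
  intro i _
  apply Commute.sum_right
  intro j _
  exact ((h.pow_pow i j).smul_left _).smul_right _

lemma commute_Wu (a b : E) : Commute (Wu K a) (Wu K b) := by
  rcases eq_or_ne a b with rfl | h
  · rfl
  · exact Commute.mul_left
      ((commute_Wy_Wy a b).mul_right (commute_Wy_Wx h))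
      (((commute_Wy_Wx h.symm).symm).mul_right (commute_Wx_Wx a b))

/-- The defining property of the incidence matrix of a multiquiver: every row has
at most one positive and at most one negative entry. -/
def CondM {V E : Type*} (γ : E → V → ℤ) : Prop :=
  ∀ e : E, (∀ v w : V, 0 < γ e v → 0 < γ e w → v = w) ∧
    (∀ v w : V, γ e v < 0 → γ e w < 0 → v = w)

lemma wx_mul_wy (e : E) : Wx K e * Wy K e = Wu K e - 1 := by
  apply LinearMap.ext; intro p
  simp [Wx, Wy, Wu, Module.End.mul_apply, LinearMap.sub_apply, pderiv_mul]

lemma wx_mul_wu (e : E) : Wx K e * Wu K e = (Wu K e - 1) * Wx K e := by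
  conv_lhs => rw [Wu]
  rw [← mul_assoc, wx_mul_wy]

lemma wy_mul_wu (e : E) : Wy K e * Wu K e = (Wu K e + 1) * Wy K e := by
  have h : Wu K e * Wy K e = Wy K e * (Wu K e - 1) := by
    conv_lhs => rw [Wu]
    rw [mul_assoc, wx_mul_wy]
  rw [add_mul, one_mul, h, mul_sub, mul_one, sub_add_cancel]

lemma xpow_mul_wu (e : E) (n : ℕ) :
    Wx K e ^ n * Wu K e = (Wu K e - (n : Module.End K (MvPolynomial E K))) * Wx K e ^ n := by
  induction n with
  | zero => simp
  | succ n ih =>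
    have h2 : Wx K e ^ n * (Wu K e - 1)
        = (Wu K e - (n : Module.End K (MvPolynomial E K)) - 1) * Wx K e ^ n := by
      rw [mul_sub, mul_one, ih, sub_mul (Wu K e - (n : Module.End K (MvPolynomial E K))) 1,
        one_mul]
    rw [pow_succ, mul_assoc, wx_mul_wu, ← mul_assoc, h2]
    push_cast
    rw [sub_sub, mul_assoc]

lemma ypow_mul_wu (e : E) (n : ℕ) :
    Wy K e ^ n * Wu K e = (Wu K e + (n : Module.End K (MvPolynomial E K))) * Wy K e ^ n := by
  induction n with
  | zero => simp
  | succ n ih =>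
    have h2 : Wy K e ^ n * (Wu K e + 1)
        = (Wu K e + (n : Module.End K (MvPolynomial E K)) + 1) * Wy K e ^ n := by
      rw [mul_add, mul_one, ih, add_mul (Wu K e + (n : Module.End K (MvPolynomial E K))) 1,
        one_mul]
    rw [pow_succ, mul_assoc, wy_mul_wu, ← mul_assoc, h2]
    push_cast
    rw [add_assoc, mul_assoc]

lemma Wz_nonneg (e : E) {p : ℤ} (hp : 0 ≤ p) : Wz K e p = Wx K e ^ p.toNat := if_pos hp

lemma Wz_negg (e : E) {p : ℤ} (hp : p < 0) : Wz K e p = Wy K e ^ (-p).toNat :=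
  if_neg (by omega)

lemma Wz_mul_wu (e : E) (p : ℤ) :
    Wz K e p * Wu K e = (Wu K e - (p : Module.End K (MvPolynomial E K))) * Wz K e p := by
  rcases le_or_gt 0 p with hp | hp
  · rw [Wz_nonneg e hp, xpow_mul_wu]
    congr 2
    rw [← Int.cast_natCast, Int.toNat_of_nonneg hp]
  · rw [Wz_negg e hp, ypow_mul_wu]
    congr 2
    rw [← Int.cast_natCast, Int.toNat_of_nonneg (by omega : (0:ℤ) ≤ -p), Int.cast_neg,
      sub_eq_add_neg]

lemma wu_mem (e : E) : Wu K e ∈ Algebra.adjoin K (Set.range fun e : E => Wu K e) :=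
  Algebra.subset_adjoin ⟨e, rfl⟩

lemma commute_Wz_Wu {e a : E} (h : a ≠ e) (p : ℤ) : Commute (Wz K e p) (Wu K a) := by
  have h1 : Commute (Wx K e) (Wu K a) :=
    ((commute_Wy_Wx h).symm).mul_right (commute_Wx_Wx e a)
  have h2 : Commute (Wy K e) (Wu K a) :=
    (commute_Wy_Wy e a).mul_right (commute_Wy_Wx (Ne.symm h))
  unfold Wz
  split_ifs
  · exact h1.pow_left _
  · exact h2.pow_left _

/-- `z` can be moved left past elements of the subalgebra generated by the `u_e`. -/
def Passes (z : Module.End K (MvPolynomial E K)) : Prop :=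
  ∀ Q ∈ Algebra.adjoin K (Set.range fun e : E => Wu K e),
    ∃ Q' ∈ Algebra.adjoin K (Set.range fun e : E => Wu K e), z * Q = Q' * z

lemma passes_one : Passes (1 : Module.End K (MvPolynomial E K)) :=
  fun Q hQ => ⟨Q, hQ, by rw [one_mul, mul_one]⟩

lemma passes_mul {z w : Module.End K (MvPolynomial E K)} (hz : Passes z) (hw : Passes w) :
    Passes (z * w) := by
  intro Q hQ
  obtain ⟨Q', hQ', h1⟩ := hw Q hQ
  obtain ⟨Q'', hQ'', h2⟩ := hz Q' hQ'
  exact ⟨Q'', hQ'', by rw [mul_assoc, h1, ← mul_assoc, h2, mul_assoc]⟩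

lemma passes_pow {z : Module.End K (MvPolynomial E K)} (hz : Passes z) (n : ℕ) :
    Passes (z ^ n) := by
  induction n with
  | zero => simpa using passes_one
  | succ n ih => rw [pow_succ]; exact passes_mul ih hz

lemma passes_Wz (e : E) (p : ℤ) : Passes (Wz K e p) := by
  intro Q hQ
  induction hQ using Algebra.adjoin_induction with
  | mem x hx =>
    obtain ⟨a, rfl⟩ := hx
    by_cases hae : a = e
    · subst hae
      exact ⟨Wu K a - (p : Module.End K (MvPolynomial E K)),
        sub_mem (wu_mem a) (intCast_mem _ p), Wz_mul_wu a p⟩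
    · exact ⟨Wu K a, wu_mem a, (commute_Wz_Wu hae p).eq⟩
  | algebraMap r =>
    exact ⟨algebraMap K _ r, Subalgebra.algebraMap_mem _ r, (Algebra.commutes r _).symm⟩
  | add x y hx hy ihx ihy =>
    obtain ⟨X, hX, hX2⟩ := ihx
    obtain ⟨Y, hY, hY2⟩ := ihy
    exact ⟨X + Y, add_mem hX hY, by rw [mul_add, hX2, hY2, add_mul]⟩
  | mul x y hx hy ihx ihy =>
    obtain ⟨X, hX, hX2⟩ := ihx
    obtain ⟨Y, hY, hY2⟩ := ihy
    exact ⟨X * Y, mul_mem hX hY,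
      by rw [← mul_assoc, hX2, mul_assoc, hY2, ← mul_assoc]⟩

lemma passes_wx (e : E) : Passes (Wx K e) := by
  have h := passes_Wz (K := K) e 1
  rwa [Wz_nonneg e (by norm_num), Int.toNat_one, pow_one] at h

lemma passes_wy (e : E) : Passes (Wy K e) := by
  have h := passes_Wz (K := K) e (-1)
  rwa [Wz_negg e (by norm_num), neg_neg, Int.toNat_one, pow_one] at h

lemma passes_Zpow (k : E → ℤ) : Passes (Zpow K k) := by
  exact Finset.noncommProd_induction _ _ _ Passes (fun a b ha hb => passes_mul ha hb)
    passes_one (fun x _ => passes_Wz x _)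

lemma xy_pow (e : E) (m : ℕ) : ∃ P ∈ Algebra.adjoin K (Set.range fun e : E => Wu K e),
    Wx K e ^ m * Wy K e ^ m = P := by
  induction m with
  | zero => exact ⟨1, one_mem _, by simp⟩
  | succ m ih =>
    obtain ⟨P, hP, hPe⟩ := ih
    obtain ⟨P', hP', hP'e⟩ := passes_wx e P hP
    refine ⟨P' * (Wu K e - 1), mul_mem hP' (sub_mem (wu_mem e) (one_mem _)), ?_⟩
    calc Wx K e ^ (m + 1) * Wy K e ^ (m + 1)
        = Wx K e * (Wx K e ^ m * Wy K e ^ m) * Wy K e := by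
          rw [pow_succ' (Wx K e), pow_succ (Wy K e)]; noncomm_ring
      _ = Wx K e * P * Wy K e := by rw [hPe]
      _ = P' * Wx K e * Wy K e := by rw [hP'e]
      _ = P' * (Wu K e - 1) := by rw [mul_assoc, wx_mul_wy]

lemma yx_pow (e : E) (m : ℕ) : ∃ P ∈ Algebra.adjoin K (Set.range fun e : E => Wu K e),
    Wy K e ^ m * Wx K e ^ m = P := by
  induction m with
  | zero => exact ⟨1, one_mem _, by simp⟩
  | succ m ih =>
    obtain ⟨P, hP, hPe⟩ := ih
    obtain ⟨P', hP', hP'e⟩ := passes_wy e P hP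
    refine ⟨P' * Wu K e, mul_mem hP' (wu_mem e), ?_⟩
    calc Wy K e ^ (m + 1) * Wx K e ^ (m + 1)
        = Wy K e * (Wy K e ^ m * Wx K e ^ m) * Wx K e := by
          rw [pow_succ' (Wy K e), pow_succ (Wx K e)]; noncomm_ring
      _ = Wy K e * P * Wx K e := by rw [hPe]
      _ = P' * Wy K e * Wx K e := by rw [hP'e]
      _ = P' * Wu K e := by rw [mul_assoc, Wu]

lemma Wz_mul_Wz (e : E) (p q : ℤ) :
    ∃ R ∈ Algebra.adjoin K (Set.range fun e : E => Wu K e),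
      Wz K e p * Wz K e q = R * Wz K e (p + q) := by
  rcases le_or_gt 0 p with hp | hp <;> rcases le_or_gt 0 q with hq | hq
  · refine ⟨1, one_mem _, ?_⟩
    rw [Wz_nonneg e hp, Wz_nonneg e hq, Wz_nonneg e (by omega), one_mul, ← pow_add]
    congr 1; omega
  · rcases le_or_gt ((-q).toNat) p.toNat with hba | hba
    · obtain ⟨P, hP, hPe⟩ := xy_pow (K := K) e (-q).toNat
      obtain ⟨P', hP', hP'e⟩ := passes_pow (passes_wx e) ((p + q).toNat) P hP
      refine ⟨P', hP', ?_⟩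
      rw [Wz_nonneg e hp, Wz_negg e hq, Wz_nonneg e (by omega)]
      have hsplit : Wx K e ^ p.toNat = Wx K e ^ (p + q).toNat * Wx K e ^ (-q).toNat := by
        rw [← pow_add]; congr 1; omega
      rw [hsplit, mul_assoc, hPe, hP'e]
    · obtain ⟨P, hP, hPe⟩ := xy_pow (K := K) e p.toNat
      refine ⟨P, hP, ?_⟩
      rw [Wz_nonneg e hp, Wz_negg e hq, Wz_negg e (by omega)]
      have hsplit : Wy K e ^ (-q).toNat = Wy K e ^ p.toNat * Wy K e ^ (-(p + q)).toNat := by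
        rw [← pow_add]; congr 1; omega
      rw [hsplit, ← mul_assoc, hPe]
  · rcases le_or_gt ((-p).toNat) q.toNat with hab | hab
    · obtain ⟨P, hP, hPe⟩ := yx_pow (K := K) e (-p).toNat
      refine ⟨P, hP, ?_⟩
      rw [Wz_negg e hp, Wz_nonneg e hq, Wz_nonneg e (by omega)]
      have hsplit : Wx K e ^ q.toNat = Wx K e ^ (-p).toNat * Wx K e ^ (p + q).toNat := by
        rw [← pow_add]; congr 1; omega
      rw [hsplit, ← mul_assoc, hPe]
    · obtain ⟨P, hP, hPe⟩ := yx_pow (K := K) e q.toNat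
      obtain ⟨P', hP', hP'e⟩ := passes_pow (passes_wy e) ((-(p + q)).toNat) P hP
      refine ⟨P', hP', ?_⟩
      rw [Wz_negg e hp, Wz_nonneg e hq, Wz_negg e (by omega)]
      have hsplit : Wy K e ^ (-p).toNat = Wy K e ^ (-(p + q)).toNat * Wy K e ^ q.toNat := by
        rw [← pow_add]; congr 1; omega
      rw [hsplit, mul_assoc, hPe, hP'e]
  · refine ⟨1, one_mem _, ?_⟩
    rw [Wz_negg e hp, Wz_negg e hq, Wz_negg e (by omega), one_mul, ← pow_add]
    congr 1; omega

/-- `z^k` restricted to a finite set of variables. -/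
noncomputable def ZT (k : E → ℤ) (T : Finset E) : Module.End K (MvPolynomial E K) :=
  T.noncommProd (fun e => Wz K e (k e)) (fun a _ b _ hab => commute_Wz hab _ _)

lemma ZT_mul (k s : E → ℤ) (T : Finset E) :
    ∃ R ∈ Algebra.adjoin K (Set.range fun e : E => Wu K e),
      ZT k T * ZT s T = R * ZT (k + s) T := by
  induction T using Finset.cons_induction with
  | empty => exact ⟨1, one_mem _, by simp [ZT]; rfl⟩
  | cons a T ha ih =>
    obtain ⟨R, hR, hRe⟩ := ih
    obtain ⟨R1, hR1, hR1e⟩ := Wz_mul_Wz (K := K) a (k a) (s a)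
    obtain ⟨R2, hR2, hR2e⟩ := passes_Wz a (k a + s a) R hR
    refine ⟨R1 * R2, mul_mem hR1 hR2, ?_⟩
    have hcomm : Commute (Wz K a (s a)) (ZT k T) :=
      Finset.noncommProd_commute _ _ _ _
        (fun x hx => commute_Wz (by rintro rfl; exact ha hx) _ _)
    have e1 : ∀ t : E → ℤ, ZT t (Finset.cons a T ha) = Wz K a (t a) * ZT t T := by
      intro t
      simp only [ZT]
      exact Finset.noncommProd_cons _ _ _ _ _
    rw [e1 k, e1 s, e1 (k + s), Pi.add_apply]
    calc Wz K a (k a) * ZT k T * (Wz K a (s a) * ZT s T)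
        = Wz K a (k a) * (ZT k T * Wz K a (s a)) * ZT s T := by simp only [mul_assoc]
      _ = Wz K a (k a) * (Wz K a (s a) * ZT k T) * ZT s T := by rw [← hcomm.eq]
      _ = (Wz K a (k a) * Wz K a (s a)) * (ZT k T * ZT s T) := by simp only [mul_assoc]
      _ = (R1 * Wz K a (k a + s a)) * (R * ZT (k + s) T) := by rw [hR1e, hRe]
      _ = R1 * ((Wz K a (k a + s a) * R) * ZT (k + s) T) := by simp only [mul_assoc]
      _ = R1 * ((R2 * Wz K a (k a + s a)) * ZT (k + s) T) := by rw [hR2e]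
      _ = R1 * R2 * (Wz K a (k a + s a) * ZT (k + s) T) := by simp only [mul_assoc]

lemma Zpow_mul (k s : E → ℤ) :
    ∃ R ∈ Algebra.adjoin K (Set.range fun e : E => Wu K e),
      Zpow K k * Zpow K s = R * Zpow K (k + s) :=
  ZT_mul k s Finset.univ

lemma Zpow_zero : Zpow K (0 : E → ℤ) = 1 := by
  refine Finset.noncommProd_induction _ _ _
    (· = (1 : Module.End K (MvPolynomial E K)))
    (fun a b ha hb => by rw [ha, hb, one_mul]) rfl (fun x _ => ?_)
  simp [Wz]

/-- Every product of monomials `z^{k_1} ⋯ z^{k_m}` in the Weyl algebra is a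
polynomial (in the `u_e`) multiple of the reduced monomial `z^{k_1 + ⋯ + k_m}`:
each `ℤE`-homogeneous component is cyclic over the polynomial subalgebra
generated by the `u_e`, with generator the monomial `z` of that degree. -/
theorem monomial_eq_poly_mul_reduced {K E : Type*} [Field K] [CharZero K]
    [Fintype E] [DecidableEq E] (L : List (E → ℤ)) :
    ∃ Q ∈ Algebra.adjoin K (Set.range fun e : E => Wu K e),
      (L.map fun k => Zpow K k).prod = Q * Zpow K L.sum := by
  induction L with
  | nil =>
    refine ⟨1, one_mem _, ?_⟩
    simp [Zpow_zero]
  | cons k L ih =>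
    obtain ⟨Q, hQ, hQe⟩ := ih
    obtain ⟨Q', hQ', hQ'e⟩ := passes_Zpow k Q hQ
    obtain ⟨R, hR, hRe⟩ := Zpow_mul (K := K) k L.sum
    refine ⟨Q' * R, mul_mem hQ' hR, ?_⟩
    rw [List.map_cons, List.prod_cons, hQe, List.sum_cons]
    calc Zpow K k * (Q * Zpow K L.sum)
        = (Zpow K k * Q) * Zpow K L.sum := by rw [mul_assoc]
      _ = Q' * (Zpow K k * Zpow K L.sum) := by rw [hQ'e, mul_assoc]
      _ = Q' * (R * Zpow K (k + L.sum)) := by rw [hRe]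
      _ = Q' * R * Zpow K (k + L.sum) := by rw [mul_assoc]
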